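/- Let a₁, a₂ ∈ SL(2,ℂ) with traces t₁, t₂, let λ ∈ ℂ with λ ≠ ±1, and set δᵢ = tᵢ² - λ - λ⁻¹ - 2 for i = 1, 2, assuming δ₁ ≠ 0 and δ₂ ≠ 0. Then the commutator a₁a₂a₁⁻¹a₂⁻¹ equals diag(λ, λ⁻¹) if and only if there exist nonzero μ, ν ∈ ℂ with a₁ = h_{t₁}^λ(μ), a₂⁻¹ = h_{t₂}^λ(ν), and (λ-1)t₁t₂ = λδ₁νμ⁻¹ - δ₂μν⁻¹. -/

import Mathlib

open Matrix

noncomputable def hMat (t l μ : ℂ) : Matrix (Fin 2) (Fin 2) ℂ :=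
  (l + 1)⁻¹ • !![l * t, μ; (t ^ 2 - l - l⁻¹ - 2) * l * μ⁻¹, t]

private theorem comm_iff' {A B D : Matrix (Fin 2) (Fin 2) ℂ} (hA : IsUnit A.det)
    (hB : IsUnit B.det) :
    A * B * A⁻¹ * B⁻¹ = D ↔ A * B = D * (B * A) := by
  constructor
  · intro h
    rw [← h, ← Matrix.mul_assoc, Matrix.nonsing_inv_mul_cancel_right _ _ hB,
      Matrix.nonsing_inv_mul_cancel_right _ _ hA]
  · intro h
    rw [h, ← Matrix.mul_assoc, Matrix.mul_nonsing_inv_cancel_right _ _ hA,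
      Matrix.mul_nonsing_inv_cancel_right _ _ hB]

set_option maxHeartbeats 1000000 in
theorem commutator_diagonal_iff (a₁ a₂ : Matrix (Fin 2) (Fin 2) ℂ) (t₁ t₂ l : ℂ)
    (ha₁ : a₁.det = 1) (ha₂ : a₂.det = 1) (ht₁ : a₁.trace = t₁) (ht₂ : a₂.trace = t₂)
    (hl1 : l ≠ 1) (hl2 : l ≠ -1)
    (hδ₁ : t₁ ^ 2 - l - l⁻¹ - 2 ≠ 0) (hδ₂ : t₂ ^ 2 - l - l⁻¹ - 2 ≠ 0) :
    a₁ * a₂ * a₁⁻¹ * a₂⁻¹ = !![l, 0; 0, l⁻¹] ↔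
      ∃ μ ν : ℂ, μ ≠ 0 ∧ ν ≠ 0 ∧ a₁ = hMat t₁ l μ ∧ a₂⁻¹ = hMat t₂ l ν ∧
        (l - 1) * t₁ * t₂ =
          l * (t₁ ^ 2 - l - l⁻¹ - 2) * μ⁻¹ * ν - (t₂ ^ 2 - l - l⁻¹ - 2) * μ * ν⁻¹ := by
  have hA : IsUnit a₁.det := ha₁ ▸ isUnit_one
  have hB : IsUnit a₂.det := ha₂ ▸ isUnit_one
  have hlm : l - 1 ≠ 0 := sub_ne_zero.mpr hl1
  have hlp : l + 1 ≠ 0 := by intro h; apply hl2; linear_combination h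
  have h1l : (1:ℂ) + l ≠ 0 := by intro h; apply hlp; linear_combination h
  constructor
  · -- forward direction
    intro h
    have hdet : (a₁ * a₂ * a₁⁻¹ * a₂⁻¹).det = 1 := by
      simp [Matrix.det_mul, Matrix.det_nonsing_inv, ha₁, ha₂]
    rw [h, Matrix.det_fin_two_of] at hdet
    have hl0 : l ≠ 0 := by intro h0; rw [h0] at hdet; simp at hdet
    have key : a₁ * a₂ = !![l, 0; 0, l⁻¹] * (a₂ * a₁) := (comm_iff' hA hB).mp h
    obtain ⟨a, b, c, d, rfl⟩ : ∃ a b c d, a₁ = !![a, b; c, d] :=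
      ⟨_, _, _, _, (Matrix.eta_fin_two a₁)⟩
    obtain ⟨p, q, r, s, rfl⟩ : ∃ p q r s, a₂ = !![p, q; r, s] :=
      ⟨_, _, _, _, (Matrix.eta_fin_two a₂)⟩
    rw [Matrix.det_fin_two_of] at ha₁ ha₂
    rw [Matrix.trace_fin_two_of] at ht₁ ht₂
    have e00 := congrFun (congrFun key 0) 0
    have e01 := congrFun (congrFun key 0) 1
    have e10 := congrFun (congrFun key 1) 0
    have e11 := congrFun (congrFun key 1) 1
    simp [Matrix.mul_apply, Fin.sum_univ_two] at e00 e01 e10 e11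
    rw [eq_inv_mul_iff_mul_eq₀ hl0] at e10 e11
    have hds : d * s = a * p := by
      have h5 : (l - 1) * (d * s - a * p) = 0 := by linear_combination e00 + e11
      have := (mul_eq_zero.mp h5).resolve_left hlm
      linear_combination this
    have h1 : b*r - l*(q*c) = (l-1)*(a*p) := by linear_combination e00
    have h2 : q*(a - l*d) = b*(l*p - s) := by linear_combination e01
    have h3 : r*(a - l*d) = c*(l*p - s) := by linear_combination -e10
    have hmd : (l*p - s)*d = -(p*(a - l*d)) := by linear_combination -hds
    have hk0 : (l-1)*((a*p*(a - l*d) + b*c*(l*p - s))*(a - l*d)) = 0 := by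
      linear_combination (-(a-l*d)^2) * h1 + (-(l*c*(a-l*d))) * h2 + (b*(a-l*d)) * h3
    have hk : a - l*d = 0 := by
      by_contra hk
      have h6 : a*p*(a - l*d) + b*c*(l*p - s) = 0 :=
        (mul_eq_zero.mp ((mul_eq_zero.mp hk0).resolve_left hlm)).resolve_right hk
      have hp : p*(a - l*d) = 0 := by
        linear_combination d*h6 - (b*c)*hmd - (p*(a-l*d))*ha₁
      have hp0 : p = 0 := (mul_eq_zero.mp hp).resolve_right hk
      have hbcs : b*c*s = 0 := by
        linear_combination (-1 : ℂ)*h6 + (a*(a-l*d) + b*c*l)*hp0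
      have hqr0 : q*r*(a-l*d)^2 = 0 := by
        linear_combination (r*(a-l*d))*h2 + (b*(l*p-s))*h3 + s*hbcs + (b*c*l*(l*p-2*s))*hp0
      have hk2 : (a-l*d)^2 = 0 := by
        linear_combination (-(a-l*d)^2)*ha₂ + ((a-l*d)^2*s)*hp0 - hqr0
      exact hk (pow_eq_zero_iff two_ne_zero |>.mp hk2)
    have hald : a = l * d := by linear_combination hk
    subst hald
    have hb : b ≠ 0 := by
      intro hb0
      apply hδ₁
      subst hb0
      have hinv : l⁻¹ = d^2 := by
        rw [inv_eq_one_div, div_eq_iff hl0]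
        linear_combination -ha₁
      rw [hinv]
      linear_combination (-(t₁ + l*d + d))*ht₁ + (l+2)*ha₁
    have hm : l * p - s = 0 := by
      have : b * (l*p - s) = 0 := by linear_combination -h2
      exact (mul_eq_zero.mp this).resolve_left hb
    have hs : s = l * p := by linear_combination -hm
    subst hs
    have hq : q ≠ 0 := by
      intro hq0
      apply hδ₂
      subst hq0
      have hinv : l⁻¹ = p^2 := by
        rw [inv_eq_one_div, div_eq_iff hl0]
        linear_combination -ha₂
      rw [hinv]
      linear_combination (-(t₂ + p + l*p))*ht₂ + (l+2)*ha₂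
    subst ht₁
    subst ht₂
    have hc : c = (l*d^2 - 1)/b := by
      field_simp
      linear_combination -ha₁
    have hr : r = (l*p^2 - 1)/q := by
      field_simp
      linear_combination -ha₂
    subst hc
    subst hr
    refine ⟨(l+1)*b, -((l+1)*q), mul_ne_zero hlp hb, neg_ne_zero.mpr (mul_ne_zero hlp hq),
      ?_, ?_, ?_⟩
    · -- a₁ = hMat
      rw [hMat]
      ext i j
      fin_cases i <;> fin_cases j <;>
        simp [Matrix.smul_apply] <;> field_simp <;> ring
    · -- a₂⁻¹ = hMat
      have hdet2 : (!![p, q; (l*p^2 - 1)/q, l*p]).det = 1 := by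
        rw [Matrix.det_fin_two_of]
        linear_combination ha₂
      have hinv : (!![p, q; (l*p^2 - 1)/q, l*p])⁻¹ = !![l*p, -q; -((l*p^2-1)/q), p] := by
        rw [Matrix.inv_def, hdet2, Matrix.adjugate_fin_two_of]
        simp
      rw [hinv, hMat]
      ext i j
      fin_cases i <;> fin_cases j <;>
        simp [Matrix.smul_apply] <;> field_simp <;> ring
    · -- the scalar relation
      field_simp at h1
      field_simp
      linear_combination (-(l+1)^2) * h1
  · -- reverse direction
    rintro ⟨μ, ν, hμ0, hν0, hμ, hν, hrel⟩
    have hl0 : l ≠ 0 := by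
      rintro rfl
      rw [hμ] at ha₁
      simp [hMat, Matrix.det_smul, Matrix.det_fin_two_of] at ha₁
    have hrel' : (l-1)*t₁*t₂*(l*μ*ν)
        = l*(l*t₁^2 - l^2 - 1 - 2*l)*ν^2 - (l*t₂^2 - l^2 - 1 - 2*l)*μ^2 := by
      field_simp at hrel
      linear_combination hrel
    have hdetH : (hMat t₂ l ν).det = 1 := by
      rw [← hν, Matrix.det_nonsing_inv, ha₂]
      simp
    have ha2 : a₂ = (hMat t₂ l ν).adjugate := by
      have h1 : a₂ * (hMat t₂ l ν) = 1 := by rw [← hν]; exact Matrix.mul_nonsing_inv _ hB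
      calc a₂ = a₂ * ((hMat t₂ l ν) * (hMat t₂ l ν).adjugate) := by
                rw [Matrix.mul_adjugate, hdetH, one_smul, mul_one]
        _ = (a₂ * hMat t₂ l ν) * (hMat t₂ l ν).adjugate := by rw [Matrix.mul_assoc]
        _ = (hMat t₂ l ν).adjugate := by rw [h1, one_mul]
    have hadj : (hMat t₂ l ν).adjugate
        = (l+1)⁻¹ • !![t₂, -ν; -((t₂^2 - l - l⁻¹ - 2)*l*ν⁻¹), l*t₂] := by
      rw [hMat, Matrix.adjugate_smul, Matrix.adjugate_fin_two_of]
      norm_num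
    rw [comm_iff' hA hB, hμ, ha2, hadj]
    simp only [hMat, Matrix.smul_mul, Matrix.mul_smul, smul_smul]
    congr 1
    rw [Matrix.mul_fin_two, Matrix.mul_fin_two, Matrix.mul_fin_two]
    ext i j
    fin_cases i <;> fin_cases j <;> simp
    · field_simp [h1l]
      linear_combination -hrel'
    · ring
    · field_simp [h1l]
      ring
    · field_simp [h1l]
      linear_combination hrel'
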